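/- Let H be a Hilbert space, S, L : H → H bounded linear operators, and ε > 0. Suppose that for some constant K_ε > 0 and every g ∈ H with ‖g‖ = 1 there exists h ∈ H with ‖h‖ ≤ K_ε and ‖Sg + L*h‖ ≤ ε. Then for every v ∈ H, ‖S*v‖ ≤ ε‖v‖ + K_ε‖Lv‖. -/

import Mathlib

open RealInnerProductSpace

/-- Duality: null approximate impulse controllability with cost `K_ε` implies
the observability estimate `‖S*v‖ ≤ ε‖v‖ + K_ε‖Lv‖`. -/
theorem controllability_implies_observability
    {H : Type*} [NormedAddCommGroup H] [InnerProductSpace ℝ H] [CompleteSpace H]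
    (S L : H →L[ℝ] H) (ε K : ℝ) (hε : 0 < ε) (hK : 0 < K)
    (hctrl : ∀ g : H, ‖g‖ = 1 →
      ∃ h : H, ‖h‖ ≤ K ∧ ‖S g + L.adjoint h‖ ≤ ε) :
    ∀ v : H, ‖S.adjoint v‖ ≤ ε * ‖v‖ + K * ‖L v‖ := by
  intro v
  set w := S.adjoint v with hw
  by_cases hw0 : w = 0
  · rw [hw0, norm_zero]
    positivity
  · have hnw : (0:ℝ) < ‖w‖ := norm_pos_iff.mpr hw0
    set g : H := ‖w‖⁻¹ • w with hg
    have hgnorm : ‖g‖ = 1 := by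
      rw [hg, norm_smul, norm_inv, norm_norm, inv_mul_cancel₀ hnw.ne']
    obtain ⟨h, hh, hsl⟩ := hctrl g hgnorm
    have key : ‖w‖ = ⟪S g, v⟫ := by
      rw [← ContinuousLinearMap.adjoint_inner_right, ← hw, hg,
        real_inner_smul_left, real_inner_self_eq_norm_sq]
      field_simp
    have h1 : ⟪S g, v⟫ = ⟪S g + L.adjoint h, v⟫ - ⟪h, L v⟫ := by
      rw [inner_add_left, ContinuousLinearMap.adjoint_inner_left]
      ring
    have h2 : ⟪S g + L.adjoint h, v⟫ ≤ ε * ‖v‖ := by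
      calc ⟪S g + L.adjoint h, v⟫ ≤ ‖S g + L.adjoint h‖ * ‖v‖ :=
            real_inner_le_norm _ _
        _ ≤ ε * ‖v‖ := by
            apply mul_le_mul_of_nonneg_right hsl (norm_nonneg _)
    have h3 : -⟪h, L v⟫ ≤ K * ‖L v‖ := by
      calc -⟪h, L v⟫ ≤ |⟪h, L v⟫| := neg_le_abs _
        _ ≤ ‖h‖ * ‖L v‖ := abs_real_inner_le_norm _ _
        _ ≤ K * ‖L v‖ := mul_le_mul_of_nonneg_right hh (norm_nonneg _)
    rw [key, h1]
    linarith
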